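/- Let r ≥ 3 and let H be a linear r-uniform hypergraph on an n-element vertex set containing no copy of B_4^r. Then r·|E(H)| ≤ (r+1)·n. -/
import Mathlib

open Finset

private lemma stmt6_aux {V : Type*} [DecidableEq V] {r : ℕ} (hr : 3 ≤ r)
    (E : Finset (Finset V)) :
    (∀ e ∈ E, e.card = r) →
    (∀ e ∈ E, ∀ f ∈ E, e ≠ f → (e ∩ f).card ≤ 1) →
    (¬ ∃ e₁ ∈ E, ∃ e₂ ∈ E, ∃ e₃ ∈ E, ∃ f ∈ E, ∃ v : V,
      e₁ ≠ e₂ ∧ e₁ ≠ e₃ ∧ e₁ ≠ f ∧ e₂ ≠ e₃ ∧ e₂ ≠ f ∧ e₃ ≠ f ∧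
      v ∈ e₁ ∧ v ∈ e₂ ∧ v ∈ e₃ ∧ v ∉ f ∧
      (f ∩ e₁).Nonempty ∧ f ∩ e₂ = ∅ ∧ f ∩ e₃ = ∅) →
    r * E.card ≤ (r + 1) * (E.biUnion id).card := by
  classical
  induction E using Finset.strongInduction with
  | _ E ih =>
  intro huniform hlinear hB4free
  by_cases hdeg : ∀ v : V, (E.filter (fun e => v ∈ e)).card ≤ r + 1
  · -- all degrees small: double counting
    have h1 : r * E.card = ∑ e ∈ E, e.card := by
      rw [Finset.sum_congr rfl huniform, Finset.sum_const, smul_eq_mul, mul_comm]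
    have h2 : ∑ e ∈ E, e.card
        = ∑ v ∈ E.biUnion id, (E.filter (fun e => v ∈ e)).card := by
      have step : ∀ e ∈ E, e.card = ∑ v ∈ E.biUnion id, if v ∈ e then 1 else 0 := by
        intro e he
        have hfe : (E.biUnion id).filter (fun v => v ∈ e) = e := by
          ext x
          simp only [Finset.mem_filter, Finset.mem_biUnion, id]
          exact ⟨fun h => h.2, fun hx => ⟨⟨e, he, hx⟩, hx⟩⟩
        conv_lhs => rw [← hfe]
        rw [Finset.card_filter]
      rw [Finset.sum_congr rfl step, Finset.sum_comm]
      refine Finset.sum_congr rfl fun v _ => ?_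
      rw [Finset.card_filter]
    have h3 : ∑ v ∈ E.biUnion id, (E.filter (fun e => v ∈ e)).card
        ≤ (r + 1) * (E.biUnion id).card := by
      calc ∑ v ∈ E.biUnion id, (E.filter (fun e => v ∈ e)).card
          ≤ ∑ _v ∈ E.biUnion id, (r + 1) :=
            Finset.sum_le_sum fun v _ => hdeg v
        _ = (r + 1) * (E.biUnion id).card := by
            rw [Finset.sum_const, smul_eq_mul, mul_comm]
    omega
  · push_neg at hdeg
    obtain ⟨v, hv⟩ := hdeg
    set S := E.filter (fun e => v ∈ e) with hS
    set R := E \ S with hR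
    have hvS : r + 2 ≤ S.card := by omega
    have hSE : S ⊆ E := Finset.filter_subset _ _
    have hSne : S.Nonempty := Finset.card_pos.mp (by omega)
    have hvmem : ∀ e ∈ S, v ∈ e := fun e he => (Finset.mem_filter.mp he).2
    -- two distinct edges of S meet only in v
    have honly : ∀ e ∈ S, ∀ e' ∈ S, e ≠ e' → ∀ x, x ∈ e → x ∈ e' → x = v := by
      intro e he e' he' hne x hx hx'
      by_contra hxv
      have h1 : 1 < (e ∩ e').card := by
        apply Finset.one_lt_card.mpr
        exact ⟨x, Finset.mem_inter.mpr ⟨hx, hx'⟩, v,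
          Finset.mem_inter.mpr ⟨hvmem e he, hvmem e' he'⟩, hxv⟩
      have := hlinear e (hSE he) e' (hSE he') hne
      omega
    -- every edge outside the star is disjoint from every star edge
    have hdisj : ∀ f ∈ R, ∀ e ∈ S, f ∩ e = ∅ := by
      intro f hf e₁ he₁
      by_contra hcon
      have hne : (f ∩ e₁).Nonempty := Finset.nonempty_iff_ne_empty.mpr hcon
      have hfE : f ∈ E := (Finset.mem_sdiff.mp hf).1
      have hvf : v ∉ f := by
        have hfns := (Finset.mem_sdiff.mp hf).2
        intro hvf
        exact hfns (Finset.mem_filter.mpr ⟨hfE, hvf⟩)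
      set T := S.filter (fun e => (f ∩ e).Nonempty) with hT
      have hTcard : T.card ≤ r := by
        have hmap : ∀ e ∈ T,
            (if h : (f ∩ e).Nonempty then h.choose else v) ∈ f := by
          intro e he
          have hne' : (f ∩ e).Nonempty := (Finset.mem_filter.mp he).2
          rw [dif_pos hne']
          exact (Finset.mem_inter.mp hne'.choose_spec).1
        have hinj : Set.InjOn (fun e => if h : (f ∩ e).Nonempty then h.choose else v)
            (T : Set (Finset V)) := by
          intro e he e' he' heq
          simp only [Finset.mem_coe] at he he'
          have hne1 : (f ∩ e).Nonempty := (Finset.mem_filter.mp he).2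
          have hne2 : (f ∩ e').Nonempty := (Finset.mem_filter.mp he').2
          simp only [dif_pos hne1, dif_pos hne2] at heq
          by_contra hnee
          have hw1 := hne1.choose_spec
          have hw2 := hne2.choose_spec
          rw [Finset.mem_inter] at hw1 hw2
          have hxv : hne1.choose = v :=
            honly e (Finset.mem_filter.mp he).1 e' (Finset.mem_filter.mp he').1 hnee
              _ hw1.2 (heq ▸ hw2.2)
          exact hvf (hxv ▸ hw1.1)
        have := Finset.card_le_card_of_injOn _ hmap hinj
        rwa [huniform f hfE] at this
      -- at least two star edges are disjoint from f
      have hsplit : (S.filter (fun e => f ∩ e = ∅)).card + T.card = S.card := by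
        rw [hT]
        have h := Finset.card_filter_add_card_filter_not
          (s := S) (p := fun e => (f ∩ e).Nonempty)
        have heqf : S.filter (fun e => ¬(f ∩ e).Nonempty)
            = S.filter (fun e => f ∩ e = ∅) := by
          apply Finset.filter_congr
          intro e _
          simp [Finset.not_nonempty_iff_eq_empty]
        rw [heqf] at h
        omega
      have h2 : 1 < (S.filter (fun e => f ∩ e = ∅)).card := by omega
      obtain ⟨e₂, he₂, e₃, he₃, hne23⟩ := Finset.one_lt_card.mp h2
      have he₂S := (Finset.mem_filter.mp he₂).1
      have he₃S := (Finset.mem_filter.mp he₃).1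
      refine hB4free ⟨e₁, hSE he₁, e₂, hSE he₂S, e₃, hSE he₃S, f, hfE, v,
        ?_, ?_, ?_, hne23, ?_, ?_, hvmem e₁ he₁, hvmem e₂ he₂S, hvmem e₃ he₃S, hvf,
        hne, (Finset.mem_filter.mp he₂).2, (Finset.mem_filter.mp he₃).2⟩
      · rintro rfl; rw [(Finset.mem_filter.mp he₂).2] at hne; exact hne.ne_empty rfl
      · rintro rfl; rw [(Finset.mem_filter.mp he₃).2] at hne; exact hne.ne_empty rfl
      · rintro rfl; exact hvf (hvmem e₁ he₁)
      · rintro rfl; exact hvf (hvmem e₂ he₂S)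
      · rintro rfl; exact hvf (hvmem e₃ he₃S)
    -- star vertex count
    have herase : ∀ e ∈ S, (e.erase v).card = r - 1 := by
      intro e he
      rw [Finset.card_erase_of_mem (hvmem e he), huniform e (hSE he)]
    have hpd : (S : Set (Finset V)).PairwiseDisjoint (fun e => e.erase v) := by
      intro e he e' he' hne
      simp only [Finset.mem_coe] at he he'
      rw [Function.onFun, Finset.disjoint_left]
      intro x hx hx'
      have := honly e he e' he' hne x (Finset.mem_of_mem_erase hx)
        (Finset.mem_of_mem_erase hx')
      exact (Finset.mem_erase.mp hx).1 this
    have hSbi : S.biUnion id = insert v (S.biUnion (fun e => e.erase v)) := by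
      ext x
      simp only [Finset.mem_biUnion, id, Finset.mem_insert, Finset.mem_erase]
      constructor
      · rintro ⟨e, he, hx⟩
        by_cases hxv : x = v
        · exact Or.inl hxv
        · exact Or.inr ⟨e, he, hxv, hx⟩
      · rintro (rfl | ⟨e, he, _, hx⟩)
        · exact ⟨hSne.choose, hSne.choose_spec, hvmem _ hSne.choose_spec⟩
        · exact ⟨e, he, hx⟩
    have hScard : (S.biUnion id).card = 1 + (r - 1) * S.card := by
      rw [hSbi, Finset.card_insert_of_notMem (by
        simp only [Finset.mem_biUnion, not_exists, not_and]
        intro e _ h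
        exact (Finset.mem_erase.mp h).1 rfl)]
      rw [Finset.card_biUnion hpd, Finset.sum_congr rfl herase, Finset.sum_const,
        smul_eq_mul]
      ring
    -- split the vertex set
    have hEbi : E.biUnion id = S.biUnion id ∪ R.biUnion id := by
      ext x
      simp only [Finset.mem_biUnion, Finset.mem_union]
      constructor
      · rintro ⟨e, he, hx⟩
        by_cases hvE : e ∈ S
        · exact Or.inl ⟨e, hvE, hx⟩
        · exact Or.inr ⟨e, Finset.mem_sdiff.mpr ⟨he, hvE⟩, hx⟩
      · rintro (⟨e, he, hx⟩ | ⟨e, he, hx⟩)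
        · exact ⟨e, hSE he, hx⟩
        · exact ⟨e, (Finset.mem_sdiff.mp he).1, hx⟩
    have hUdisj : Disjoint (S.biUnion id) (R.biUnion id) := by
      rw [Finset.disjoint_left]
      intro x hx hx'
      obtain ⟨e, he, hxe⟩ := Finset.mem_biUnion.mp hx
      obtain ⟨f, hf, hxf⟩ := Finset.mem_biUnion.mp hx'
      have := hdisj f hf e he
      have : x ∈ f ∩ e := Finset.mem_inter.mpr ⟨hxf, hxe⟩
      rw [hdisj f hf e he] at this
      exact absurd this (Finset.notMem_empty x)
    have hUcard : (E.biUnion id).card = (S.biUnion id).card + (R.biUnion id).card := by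
      rw [hEbi, Finset.card_union_of_disjoint hUdisj]
    -- induction on R
    have hRss : R ⊂ E := Finset.sdiff_ssubset hSE hSne
    have hRE : R ⊆ E := Finset.sdiff_subset
    have ihR : r * R.card ≤ (r + 1) * (R.biUnion id).card := by
      apply ih R hRss (fun e he => huniform e (hRE he))
        (fun e he f hf => hlinear e (hRE he) f (hRE hf))
      rintro ⟨e₁, h1, e₂, h2, e₃, h3, f, h4, rest⟩
      exact hB4free ⟨e₁, hRE h1, e₂, hRE h2, e₃, hRE h3, f, hRE h4, rest⟩
    have hEcard : E.card = S.card + R.card := by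
      have hcle := Finset.card_le_card hSE
      rw [hR, Finset.card_sdiff_of_subset hSE]
      omega
    -- star arithmetic
    have hstar : r * S.card ≤ (r + 1) * (S.biUnion id).card := by
      rw [hScard]
      obtain ⟨k, rfl⟩ : ∃ k, r = k + 3 := ⟨r - 3, by omega⟩
      simp only [show k + 3 - 1 = k + 2 from rfl]
      have h1 : k + 3 ≤ (k + 4) * (k + 2) := by nlinarith
      calc (k + 3) * S.card ≤ ((k + 4) * (k + 2)) * S.card :=
            Nat.mul_le_mul_right _ h1
        _ = (k + 4) * ((k + 2) * S.card) := by ring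
        _ ≤ (k + 4) * (1 + (k + 2) * S.card) :=
            Nat.mul_le_mul_left _ (Nat.le_add_left _ _)
        _ = (k + 3 + 1) * (1 + (k + 2) * S.card) := by ring
    calc r * E.card = r * S.card + r * R.card := by rw [hEcard]; ring
      _ ≤ (r + 1) * (S.biUnion id).card + (r + 1) * (R.biUnion id).card :=
          Nat.add_le_add hstar ihR
      _ = (r + 1) * (E.biUnion id).card := by rw [hUcard]; ring

/-- A linear r-uniform hypergraph on n vertices with no copy of B_4^r
satisfies r·|E(H)| ≤ (r+1)·n. -/
theorem stmt_6 {V : Type*} [Fintype V] [DecidableEq V]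
    (r n : ℕ) (hr : 3 ≤ r)
    (hn : Fintype.card V = n)
    (E : Finset (Finset V))
    (huniform : ∀ e ∈ E, e.card = r)
    (hlinear : ∀ e ∈ E, ∀ f ∈ E, e ≠ f → (e ∩ f).card ≤ 1)
    (hB4free : ¬ ∃ e₁ ∈ E, ∃ e₂ ∈ E, ∃ e₃ ∈ E, ∃ f ∈ E, ∃ v : V,
      e₁ ≠ e₂ ∧ e₁ ≠ e₃ ∧ e₁ ≠ f ∧ e₂ ≠ e₃ ∧ e₂ ≠ f ∧ e₃ ≠ f ∧
      v ∈ e₁ ∧ v ∈ e₂ ∧ v ∈ e₃ ∧ v ∉ f ∧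
      (f ∩ e₁).Nonempty ∧ f ∩ e₂ = ∅ ∧ f ∩ e₃ = ∅) :
    r * E.card ≤ (r + 1) * n := by
  have h := stmt6_aux hr E huniform hlinear hB4free
  have h2 : (E.biUnion id).card ≤ n := by
    rw [← hn]
    exact Finset.card_le_univ _
  calc r * E.card ≤ (r + 1) * (E.biUnion id).card := h
    _ ≤ (r + 1) * n := Nat.mul_le_mul_left _ h2
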